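/- arXiv:0810.5582 — 7 statements merged into one kernel-verified Lean document; each statement's English description precedes it below -/
import Mathlib

section
/- Let $G$ be a finite nonempty multiset of points in $\{0,1\}^m$ (represented as a finite index set $I$ with a map $x : I \to \mathrm{Fin}\ m \to \mathrm{Bool}$). If a center $c \in \{0,1\}^m$ is chosen by picking an index $j \in I$ uniformly at random and setting $c = x(j)$, then the expected sum of Hamming distances $\mathbb{E}[\sum_{i \in I} d_H(x(i), c)]$ equals $\sum_{k=1}^{m} \frac{2 N_1^k N_0^k}{N_1^k + N_0^k}$, where $N_1^k = |\{i \in I : x(i)_k = 1\}|$ and $N_0^k = |\{i \in I : x(i)_k = 0\}|$ (terms with $N_1^k + N_0^k = 0$ are interpreted as $0$; here $N_1^k + N_0^k = |I| > 0$). -/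
open Finset

theorem stmt1 {I : Type*} [Fintype I] [Nonempty I] {m : ℕ} (x : I → Fin m → Bool) :
    (∑ j : I, ∑ i : I, (hammingDist (x i) (x j) : ℝ)) / (Fintype.card I : ℝ) =
      ∑ s : Fin m,
        (2 * ((Finset.univ.filter fun i => x i s = true).card : ℝ) *
            ((Finset.univ.filter fun i => x i s = false).card : ℝ)) /
          (((Finset.univ.filter fun i => x i s = true).card : ℝ) +
            ((Finset.univ.filter fun i => x i s = false).card : ℝ)) := by
  have hcard : ∀ s : Fin m,
      ((Finset.univ.filter fun i => x i s = true).card : ℝ) +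
        ((Finset.univ.filter fun i => x i s = false).card : ℝ) = (Fintype.card I : ℝ) := by
    intro s
    have := Finset.card_filter_add_card_filter_not
      (s := (Finset.univ : Finset I)) (p := fun i => x i s = true)
    simp only [Bool.not_eq_true] at this
    rw [← Nat.cast_add, this, Finset.card_univ]
  have hham : ∀ j i : I, (hammingDist (x i) (x j) : ℝ) =
      ∑ s : Fin m, if x i s ≠ x j s then (1:ℝ) else 0 := by
    intro j i
    rw [hammingDist, Finset.card_filter]
    push_cast
    rfl
  have hsum : ∀ s : Fin m,
      ∑ j : I, ∑ i : I, (if x i s ≠ x j s then (1:ℝ) else 0) =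
        2 * ((Finset.univ.filter fun i => x i s = true).card : ℝ) *
          ((Finset.univ.filter fun i => x i s = false).card : ℝ) := by
    intro s
    rw [← Finset.sum_filter_add_sum_filter_not Finset.univ (fun j => x j s = true)]
    have h1 : ∀ j ∈ Finset.univ.filter (fun j => x j s = true),
        ∑ i : I, (if x i s ≠ x j s then (1:ℝ) else 0) =
          ((Finset.univ.filter fun i => x i s = false).card : ℝ) := by
      intro j hj
      simp only [Finset.mem_filter] at hj
      rw [Finset.card_filter]
      push_cast
      refine Finset.sum_congr rfl fun i _ => ?_
      rw [hj.2]
      rcases Bool.eq_false_or_eq_true (x i s) with h | h <;> simp [h]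
    have h2 : ∀ j ∈ Finset.univ.filter (fun j => ¬ x j s = true),
        ∑ i : I, (if x i s ≠ x j s then (1:ℝ) else 0) =
          ((Finset.univ.filter fun i => x i s = true).card : ℝ) := by
      intro j hj
      simp only [Finset.mem_filter, Bool.not_eq_true] at hj
      rw [Finset.card_filter]
      push_cast
      refine Finset.sum_congr rfl fun i _ => ?_
      rw [hj.2]
      rcases Bool.eq_false_or_eq_true (x i s) with h | h <;> simp [h]
    rw [Finset.sum_congr rfl h1, Finset.sum_congr rfl h2,
      Finset.sum_const, Finset.sum_const]
    have : (Finset.univ.filter fun j => ¬ x j s = true) =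
        (Finset.univ.filter fun j => x j s = false) := by
      simp [Bool.not_eq_true]
    rw [this]
    simp only [nsmul_eq_mul]
    ring
  have key : (∑ j : I, ∑ i : I, (hammingDist (x i) (x j) : ℝ)) =
      ∑ s : Fin m, 2 * ((Finset.univ.filter fun i => x i s = true).card : ℝ) *
        ((Finset.univ.filter fun i => x i s = false).card : ℝ) := by
    simp only [hham]
    rw [Finset.sum_congr rfl fun j _ => Finset.sum_comm, Finset.sum_comm]
    exact Finset.sum_congr rfl fun s _ => hsum s
  rw [key, Finset.sum_div]
  exact Finset.sum_congr rfl fun s _ => by rw [hcard s]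
end

section
/- Let $m, k \ge 1$ and let a finite set of points in $\{0,1\}^m$ be partitioned into clusters each of size at least $k$, with an arbitrary center in $\{0,1\}^m$ assigned to each cluster. Then there exists an assignment of centers to the same clusters, with each center chosen from among the points of its own cluster, whose total cost (sum over all points of the Hamming distance to their cluster's center) is at most twice the total cost of the original assignment. -/
open Finset

theorem stmt4 {I C : Type*} [Fintype I] [Fintype C] [DecidableEq C] {m k : ℕ}
    (hm : 1 ≤ m) (hk : 1 ≤ k) (x : I → Fin m → Bool) (g : I → C)
    (c : C → Fin m → Bool)
    (hsize : ∀ t : C, k ≤ (Finset.univ.filter fun i => g i = t).card) :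
    ∃ sel : C → I, (∀ t : C, g (sel t) = t) ∧
      ∑ i : I, hammingDist (x i) (x (sel (g i))) ≤
        2 * ∑ i : I, hammingDist (x i) (c (g i)) := by
  classical
  have hne : ∀ t : C, (Finset.univ.filter fun i => g i = t).Nonempty := by
    intro t
    rw [← Finset.card_pos]
    exact lt_of_lt_of_le hk (hsize t)
  choose sel hsel hmin using fun t =>
    Finset.exists_min_image _ (fun i => hammingDist (x i) (c t)) (hne t)
  refine ⟨sel, fun t => (Finset.mem_filter.mp (hsel t)).2, ?_⟩
  have key : ∀ i : I, hammingDist (c (g i)) (x (sel (g i))) ≤ hammingDist (x i) (c (g i)) := by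
    intro i
    rw [hammingDist_comm]
    exact hmin (g i) i (Finset.mem_filter.mpr ⟨Finset.mem_univ i, rfl⟩)
  calc ∑ i : I, hammingDist (x i) (x (sel (g i)))
      ≤ ∑ i : I, (hammingDist (x i) (c (g i)) + hammingDist (c (g i)) (x (sel (g i)))) :=
        Finset.sum_le_sum fun i _ => hammingDist_triangle _ _ _
    _ = ∑ i : I, hammingDist (x i) (c (g i)) + ∑ i : I, hammingDist (c (g i)) (x (sel (g i))) :=
        Finset.sum_add_distrib
    _ ≤ ∑ i : I, hammingDist (x i) (c (g i)) + ∑ i : I, hammingDist (x i) (c (g i)) := by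
        gcongr
        exact key _
    _ = 2 * ∑ i : I, hammingDist (x i) (c (g i)) := (two_mul _).symm
end

section
/- Let $R$ be a finite dataset of tuples in $\{0,1\}^m$ and consider a feasible suppression-based $k$-anonymous solution: a partition of the tuples into groups of size at least $k$ together with, for each group, a set of suppressed columns such that all tuples in a group agree on all non-suppressed columns; its cost is the total number of suppressed cells (number of tuples in the group times number of suppressed columns, summed over groups). From such a solution one can construct a flip-based $k$-anonymous solution (a modification of the dataset by flipping bits so that every tuple is identical to at least $k-1$ others) whose cost (number of flipped bits) is at most the suppression cost. -/
open Finset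

theorem stmt6 {I C : Type*} [Fintype I] [Fintype C] [DecidableEq C] {m k : ℕ}
    (x : I → Fin m → Bool) (g : I → C) (P : C → Finset (Fin m))
    (hsize : ∀ t : C, k ≤ (Finset.univ.filter fun i => g i = t).card)
    (hagree : ∀ i j : I, g i = g j → ∀ s : Fin m, s ∉ P (g i) → x i s = x j s) :
    ∃ x' : I → Fin m → Bool,
      (∀ i : I, k ≤ (Finset.univ.filter fun j => x' j = x' i).card) ∧
      ∑ i : I, hammingDist (x i) (x' i) ≤
        ∑ t : C, (Finset.univ.filter fun i => g i = t).card * (P t).card := by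
  classical
  set rep : C → (Fin m → Bool) := fun t =>
    if h : (Finset.univ.filter fun i => g i = t).Nonempty then x h.choose
    else fun _ => false with hrep
  refine ⟨fun i => rep (g i), ?_, ?_⟩
  · intro i
    refine le_trans (hsize (g i)) (Finset.card_le_card ?_)
    intro j hj
    simp only [mem_filter, mem_univ, true_and] at hj ⊢
    rw [hj]
  · have key : ∀ i, hammingDist (x i) (rep (g i)) ≤ (P (g i)).card := by
      intro i
      have hne : (Finset.univ.filter fun j => g j = g i).Nonempty := ⟨i, by simp⟩
      have hj : g hne.choose = g i := by
        have := hne.choose_spec; simpa using this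
      have hrepi : rep (g i) = x hne.choose := by
        rw [hrep]; simp only [dif_pos hne]
      rw [hrepi]
      have hsub : (Finset.univ.filter fun s => x i s ≠ x hne.choose s) ⊆ P (g i) := by
        intro s hs
        simp only [mem_filter, mem_univ, true_and] at hs
        by_contra hns
        exact hs (hagree i hne.choose hj.symm s hns)
      calc hammingDist (x i) (x hne.choose)
          = (Finset.univ.filter fun s => x i s ≠ x hne.choose s).card := by
            simp [hammingDist, Finset.filter_ne']
        _ ≤ (P (g i)).card := Finset.card_le_card hsub
    calc ∑ i : I, hammingDist (x i) (rep (g i)) ≤ ∑ i : I, (P (g i)).card :=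
          Finset.sum_le_sum fun i _ => key i
      _ = ∑ t : C, ∑ i ∈ Finset.univ.filter (fun i => g i = t), (P (g i)).card :=
          (Finset.sum_fiberwise _ _ _).symm
      _ = ∑ t : C, (Finset.univ.filter fun i => g i = t).card * (P t).card := by
          refine Finset.sum_congr rfl fun t _ => ?_
          rw [Finset.sum_congr rfl (fun i hi => ?_), Finset.sum_const, smul_eq_mul]
          simp only [mem_filter] at hi
          rw [hi.2]
end

section
/- Let $OPT_{flip}$ be an optimal flip-based $k$-anonymous solution of a binary dataset $R$ of $n \ge k$ tuples in $\{0,1\}^m$, in which every anonymity group has size at most $2k - 1$. Then the optimal suppression-based $k$-anonymization cost $\mathrm{Cost}(OPT_*)$ satisfies $\mathrm{Cost}(OPT_*) \le (2k-1) \cdot \mathrm{Cost}(OPT_{flip})$. -/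
open Finset

theorem stmt8 {I : Type*} [Fintype I] [DecidableEq I] {m k : ℕ} (hk : 1 ≤ k)
    (hn : k ≤ Fintype.card I) (x : I → Fin m → Bool)
    (r : I → I) (y : I → Fin m → Bool)
    (hidem : ∀ i, r (r i) = r i)
    (hsize : ∀ i : I, k ≤ (Finset.univ.filter fun j => r j = r i).card)
    (hsmall : ∀ i : I, (Finset.univ.filter fun j => r j = r i).card ≤ 2 * k - 1) :
    ∃ (r' : I → I) (P : I → Finset (Fin m)),
      (∀ i, r' (r' i) = r' i) ∧
      (∀ i : I, k ≤ (Finset.univ.filter fun j => r' j = r' i).card) ∧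
      (∀ i j : I, r' i = r' j → ∀ s : Fin m, s ∉ P (r' i) → x i s = x j s) ∧
      ∑ i : I, (P (r' i)).card ≤ (2 * k - 1) * ∑ i : I, hammingDist (x i) (y (r i)) := by
  classical
  refine ⟨r, fun g => univ.filter fun s => ∃ j, r j = g ∧ x j s ≠ y g s, hidem, hsize, ?_, ?_⟩
  · intro i j hij s hs
    simp only [mem_filter, mem_univ, true_and, not_exists] at hs
    push_neg at hs
    have h1 : x i s = y (r i) s := hs i rfl
    have h2 : x j s = y (r i) s := hs j hij.symm
    rw [h1, h2]
  · have key : ∀ i : I,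
        ((univ.filter fun s => ∃ j, r j = r i ∧ x j s ≠ y (r i) s)).card ≤
          ∑ j ∈ univ.filter (fun j => r j = r i), hammingDist (x j) (y (r j)) := by
      intro i
      have hsub : (univ.filter fun s => ∃ j, r j = r i ∧ x j s ≠ y (r i) s) ⊆
          (univ.filter (fun j => r j = r i)).biUnion
            (fun j => univ.filter fun s => x j s ≠ y (r i) s) := by
        intro s hs
        simp only [mem_filter, mem_univ, true_and] at hs
        obtain ⟨j, hj, hne⟩ := hs
        exact mem_biUnion.2 ⟨j, by simp [hj], by simp [hne]⟩
      calc _ ≤ _ := card_le_card hsub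
        _ ≤ ∑ j ∈ univ.filter (fun j => r j = r i),
              (univ.filter fun s => x j s ≠ y (r i) s).card := card_biUnion_le
        _ = ∑ j ∈ univ.filter (fun j => r j = r i), hammingDist (x j) (y (r j)) := by
            refine sum_congr rfl fun j hj => ?_
            simp only [mem_filter] at hj
            rw [hj.2]
            simp [hammingDist]
    calc ∑ i : I, ((univ.filter fun s => ∃ j, r j = r i ∧ x j s ≠ y (r i) s)).card
        ≤ ∑ i : I, ∑ j ∈ univ.filter (fun j => r j = r i),
            hammingDist (x j) (y (r j)) := sum_le_sum fun i _ => key i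
      _ = ∑ i : I, ∑ j : I, if r j = r i then hammingDist (x j) (y (r j)) else 0 := by
          simp [sum_filter]
      _ = ∑ j : I, ∑ i : I, if r j = r i then hammingDist (x j) (y (r j)) else 0 :=
          sum_comm
      _ = ∑ j : I, (univ.filter fun i => r j = r i).card * hammingDist (x j) (y (r j)) := by
          refine sum_congr rfl fun j _ => ?_
          rw [← sum_filter, sum_const, smul_eq_mul]
      _ ≤ ∑ j : I, (2 * k - 1) * hammingDist (x j) (y (r j)) := by
          refine sum_le_sum fun j _ => Nat.mul_le_mul_right _ ?_
          have : (univ.filter fun i => r j = r i) = (univ.filter fun i => r i = r j) := by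
            apply filter_congr; intro i _; simp [eq_comm]
          rw [this]
          exact hsmall j
      _ = (2 * k - 1) * ∑ i : I, hammingDist (x i) (y (r i)) := by rw [mul_sum]
end

section
/- In any flip-based $k$-anonymous solution, any anonymity group of size $2k$ or more can be split into two groups each of size at least $k$ without increasing the cost; consequently, there always exists an optimal flip-based $k$-anonymous solution in which every group has size at most $2k - 1$. -/
open Finset

section AuxStmt10

variable {I : Type*} [Fintype I] [DecidableEq I] {m k : ℕ}

/-- Splitting step: if some class has size ≥ 2k, we can rearrange into a feasible
solution with the same cost and strictly smaller total class-size measure. -/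
lemma stmt10_split (hk : 1 ≤ k) (x y : I → Fin m → Bool) (r : I → I)
    (hidem : ∀ i, r (r i) = r i)
    (hsize : ∀ i, k ≤ (Finset.univ.filter fun j => r j = r i).card)
    (i0 : I) (hbig : 2 * k ≤ (Finset.univ.filter fun j => r j = r i0).card) :
    ∃ (r' : I → I) (y' : I → Fin m → Bool),
      (∀ i, r' (r' i) = r' i) ∧
      (∀ i, k ≤ (Finset.univ.filter fun j => r' j = r' i).card) ∧
      (∑ i : I, hammingDist (x i) (y' (r' i)) = ∑ i : I, hammingDist (x i) (y (r i))) ∧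
      (∑ i : I, (Finset.univ.filter fun j => r' j = r' i).card) <
        (∑ i : I, (Finset.univ.filter fun j => r j = r i).card) := by
  classical
  set c : I := r i0 with hc_def
  have hcc : r c = c := hidem i0
  set C : Finset I := Finset.univ.filter fun j => r j = c with hC_def
  have hCmem : ∀ j, j ∈ C ↔ r j = c := by
    intro j; simp [hC_def]
  have hcC : c ∈ C := (hCmem c).2 hcc
  have hCcard : 2 * k ≤ C.card := hbig
  -- choose S ⊆ C with c ∈ S and card S = k
  obtain ⟨S, hcS, hSC, hScard⟩ :=
    Finset.exists_subsuperset_card_eq (s := {c}) (t := C) (n := k)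
      (by simpa using hcC) (by simpa using hk) (le_trans (by omega) hCcard)
  have hcS' : c ∈ S := hcS (by simp)
  -- choose t ∈ C \ S
  have hCSdcard : (C \ S).card = C.card - k := by
    rw [Finset.card_sdiff_of_subset hSC, hScard]
  have hCSd_ne : (C \ S).Nonempty := by
    rw [← Finset.card_pos, hCSdcard]; omega
  obtain ⟨t, ht⟩ := hCSd_ne
  have htC : t ∈ C := (Finset.mem_sdiff.1 ht).1
  have htS : t ∉ S := (Finset.mem_sdiff.1 ht).2
  have hrt : r t = c := (hCmem t).1 htC
  have htc : t ≠ c := fun h => htS (h ▸ hcS')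
  -- define the new assignment
  set r' : I → I := fun j => if r j = c ∧ j ∉ S then t else r j with hr'_def
  set y' : I → Fin m → Bool := fun j => if j = t then y c else y j with hy'_def
  -- basic computation facts
  have hr'S : ∀ j ∈ S, r' j = c := by
    intro j hj
    have : r j = c := (hCmem j).1 (hSC hj)
    simp [hr'_def, hj, this]
  have hr'CS : ∀ j, j ∈ C → j ∉ S → r' j = t := by
    intro j hj hj'
    have : r j = c := (hCmem j).1 hj
    simp [hr'_def, hj', this]
  have hr'out : ∀ j, j ∉ C → r' j = r j := by
    intro j hj
    have : ¬ (r j = c) := fun h => hj ((hCmem j).2 h)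
    simp [hr'_def, this]
  have hrne_t : ∀ j, j ∉ C → r j ≠ t := by
    intro j hj h
    have h1 : r (r j) = r j := hidem j
    rw [h] at h1
    exact htc (by rw [← h1, hrt])
  -- value of r' at idempotent points
  have hr't : r' t = t := by
    simp [hr'_def, hrt, htS]
  have hr'c : r' c = c := hr'S c hcS'
  -- idempotence
  have hidem' : ∀ i, r' (r' i) = r' i := by
    intro j
    by_cases hjC : j ∈ C
    · by_cases hjS : j ∈ S
      · rw [hr'S j hjS, hr'c]
      · rw [hr'CS j hjC hjS, hr't]
    · rw [hr'out j hjC]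
      have h1 : r (r j) = r j := hidem j
      have hrjC : r j ∉ C := by
        intro h
        have h2 : r (r j) = c := (hCmem _).1 h
        rw [h1] at h2
        exact hjC ((hCmem j).2 h2)
      rw [hr'out _ hrjC, h1]
  -- class descriptions
  have hclS : ∀ j ∈ S, (Finset.univ.filter fun j' => r' j' = r' j) = S := by
    intro j hj
    ext j'
    simp only [Finset.mem_filter, Finset.mem_univ, true_and]
    rw [hr'S j hj]
    constructor
    · intro h
      by_cases hj'C : j' ∈ C
      · by_cases hj'S : j' ∈ S
        · exact hj'S
        · rw [hr'CS j' hj'C hj'S] at h; exact absurd h htc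
      · rw [hr'out j' hj'C] at h
        exact absurd ((hCmem j').2 h) hj'C
    · intro h; exact hr'S j' h
  have hclT : ∀ j, j ∈ C → j ∉ S → (Finset.univ.filter fun j' => r' j' = r' j) = C \ S := by
    intro j hjC hjS
    ext j'
    simp only [Finset.mem_filter, Finset.mem_univ, true_and, Finset.mem_sdiff]
    rw [hr'CS j hjC hjS]
    constructor
    · intro h
      by_cases hj'C : j' ∈ C
      · by_cases hj'S : j' ∈ S
        · rw [hr'S j' hj'S] at h; exact absurd h.symm htc
        · exact ⟨hj'C, hj'S⟩
      · rw [hr'out j' hj'C] at h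
        exact absurd h (hrne_t j' hj'C)
    · intro ⟨h1, h2⟩; exact hr'CS j' h1 h2
  have hclOut : ∀ j, j ∉ C →
      (Finset.univ.filter fun j' => r' j' = r' j) = (Finset.univ.filter fun j' => r j' = r j) := by
    intro j hjC
    ext j'
    simp only [Finset.mem_filter, Finset.mem_univ, true_and]
    rw [hr'out j hjC]
    constructor
    · intro h
      by_cases hj'C : j' ∈ C
      · by_cases hj'S : j' ∈ S
        · rw [hr'S j' hj'S] at h
          exact absurd ((hCmem j).2 h.symm) hjC
        · rw [hr'CS j' hj'C hj'S] at h
          exact absurd h.symm (hrne_t j hjC)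
      · rwa [hr'out j' hj'C] at h
    · intro h
      have hj'C : j' ∉ C := by
        intro hmem
        exact hjC ((hCmem j).2 (h ▸ (hCmem j').1 hmem))
      rw [hr'out j' hj'C]; exact h
  -- class of any j ∈ C under r equals C
  have hclC : ∀ j ∈ C, (Finset.univ.filter fun j' => r j' = r j) = C := by
    intro j hj
    have : r j = c := (hCmem j).1 hj
    rw [hC_def, this]
  refine ⟨r', y', hidem', ?_, ?_, ?_⟩
  · -- sizes ≥ k
    intro j
    by_cases hjC : j ∈ C
    · by_cases hjS : j ∈ S
      · rw [hclS j hjS, hScard]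
      · rw [hclT j hjC hjS, hCSdcard]; omega
    · rw [hclOut j hjC]; exact hsize j
  · -- equal cost
    apply Finset.sum_congr rfl
    intro j _
    congr 1
    by_cases hjC : j ∈ C
    · have hrj : r j = c := (hCmem j).1 hjC
      by_cases hjS : j ∈ S
      · rw [hr'S j hjS, hrj, hy'_def]
        simp [htc.symm]
      · rw [hr'CS j hjC hjS, hrj, hy'_def]
        simp
    · rw [hr'out j hjC, hy'_def]
      simp [hrne_t j hjC]
  · -- measure strictly decreases
    refine Finset.sum_lt_sum (fun j _ => ?_) ⟨c, Finset.mem_univ c, ?_⟩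
    · 
      by_cases hjC : j ∈ C
      · by_cases hjS : j ∈ S
        · rw [hclS j hjS, hclC j hjC]
          exact Finset.card_le_card hSC
        · rw [hclT j hjC hjS, hclC j hjC]
          exact Finset.card_le_card (Finset.sdiff_subset)
      · rw [hclOut j hjC]
    · rw [hclS c hcS', hclC c hcC, hScard]
      omega

/-- There is an optimal feasible solution with all classes of size ≤ 2k-1, by
induction on the total class-size measure. -/
lemma stmt10_shrink (hk : 1 ≤ k) (x : I → Fin m → Bool) :
    ∀ (n : ℕ) (r : I → I) (y : I → Fin m → Bool),
      (∀ i, r (r i) = r i) →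
      (∀ i, k ≤ (Finset.univ.filter fun j => r j = r i).card) →
      (∀ (r' : I → I) (y' : I → Fin m → Bool), (∀ i, r' (r' i) = r' i) →
        (∀ i, k ≤ (Finset.univ.filter fun j => r' j = r' i).card) →
        ∑ i : I, hammingDist (x i) (y (r i)) ≤ ∑ i : I, hammingDist (x i) (y' (r' i))) →
      (∑ i : I, (Finset.univ.filter fun j => r j = r i).card) ≤ n →
      ∃ (r₀ : I → I) (y₀ : I → Fin m → Bool),
        (∀ i, r₀ (r₀ i) = r₀ i) ∧
        (∀ i, k ≤ (Finset.univ.filter fun j => r₀ j = r₀ i).card) ∧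
        (∀ i, (Finset.univ.filter fun j => r₀ j = r₀ i).card ≤ 2 * k - 1) ∧
        (∀ (r' : I → I) (y' : I → Fin m → Bool), (∀ i, r' (r' i) = r' i) →
          (∀ i, k ≤ (Finset.univ.filter fun j => r' j = r' i).card) →
          ∑ i : I, hammingDist (x i) (y₀ (r₀ i)) ≤
            ∑ i : I, hammingDist (x i) (y' (r' i))) := by
  intro n
  induction n with
  | zero =>
    intro r y hidem hsize hopt hmeas
    by_cases hsmall : ∀ i, (Finset.univ.filter fun j => r j = r i).card ≤ 2 * k - 1
    · exact ⟨r, y, hidem, hsize, hsmall, hopt⟩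
    · push_neg at hsmall
      obtain ⟨i0, hi0⟩ := hsmall
      have hbig : 2 * k ≤ (Finset.univ.filter fun j => r j = r i0).card := by omega
      obtain ⟨r', y', _, _, _, hlt⟩ := stmt10_split hk x y r hidem hsize i0 hbig
      omega
  | succ n ih =>
    intro r y hidem hsize hopt hmeas
    by_cases hsmall : ∀ i, (Finset.univ.filter fun j => r j = r i).card ≤ 2 * k - 1
    · exact ⟨r, y, hidem, hsize, hsmall, hopt⟩
    · push_neg at hsmall
      obtain ⟨i0, hi0⟩ := hsmall
      have hbig : 2 * k ≤ (Finset.univ.filter fun j => r j = r i0).card := by omega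
      obtain ⟨r', y', hidem', hsize', hcost, hlt⟩ := stmt10_split hk x y r hidem hsize i0 hbig
      refine ih r' y' hidem' hsize' ?_ (by omega)
      intro r'' y'' h1 h2
      rw [hcost]
      exact hopt r'' y'' h1 h2

end AuxStmt10

theorem stmt10 {I : Type*} [Fintype I] [DecidableEq I] {m k : ℕ} (hk : 1 ≤ k)
    (hI : k ≤ Fintype.card I) (x : I → Fin m → Bool) :
    (∀ G : Finset I, 2 * k ≤ G.card → ∃ G1 G2 : Finset I,
        Disjoint G1 G2 ∧ G1 ∪ G2 = G ∧ k ≤ G1.card ∧ k ≤ G2.card) ∧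
    ∃ (r : I → I) (y : I → Fin m → Bool),
      (∀ i, r (r i) = r i) ∧
      (∀ i : I, k ≤ (Finset.univ.filter fun j => r j = r i).card) ∧
      (∀ i : I, (Finset.univ.filter fun j => r j = r i).card ≤ 2 * k - 1) ∧
      ∀ (r' : I → I) (y' : I → Fin m → Bool), (∀ i, r' (r' i) = r' i) →
        (∀ i : I, k ≤ (Finset.univ.filter fun j => r' j = r' i).card) →
        ∑ i : I, hammingDist (x i) (y (r i)) ≤
          ∑ i : I, hammingDist (x i) (y' (r' i)) := by
  classical
  constructor
  · -- part 1: splitting a big group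
    intro G hG
    obtain ⟨G1, hG1sub, hG1card⟩ := Finset.exists_subset_card_eq (s := G) (n := k) (le_trans (by omega) hG)
    refine ⟨G1, G \ G1, Finset.disjoint_sdiff, Finset.union_sdiff_of_subset hG1sub, ?_, ?_⟩
    · omega
    · rw [Finset.card_sdiff_of_subset hG1sub, hG1card]; omega
  · -- part 2: existence of an optimal solution with small groups
    -- first, a feasible solution exists
    have hI1 : 0 < Fintype.card I := lt_of_lt_of_le hk hI
    obtain ⟨i0⟩ := Fintype.card_pos_iff.1 hI1
    -- the set of feasible pairs
    set T : Set ((I → I) × (I → Fin m → Bool)) :=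
      {p | (∀ i, p.1 (p.1 i) = p.1 i) ∧
        ∀ i, k ≤ (Finset.univ.filter fun j => p.1 j = p.1 i).card} with hT_def
    have hTfin : T.Finite := Set.toFinite _
    have hTne : T.Nonempty := by
      refine ⟨(fun _ => i0, x), fun i => rfl, fun i => ?_⟩
      have : (Finset.univ.filter fun j : I => i0 = i0) = Finset.univ := by simp
      simpa [this] using hI
    obtain ⟨p, hpT, hpmin⟩ := Set.exists_min_image T
      (fun p => ∑ i : I, hammingDist (x i) (p.2 (p.1 i))) hTfin hTne
    obtain ⟨hpidem, hpsize⟩ := hpT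
    have hopt : ∀ (r' : I → I) (y' : I → Fin m → Bool), (∀ i, r' (r' i) = r' i) →
        (∀ i, k ≤ (Finset.univ.filter fun j => r' j = r' i).card) →
        ∑ i : I, hammingDist (x i) (p.2 (p.1 i)) ≤
          ∑ i : I, hammingDist (x i) (y' (r' i)) := by
      intro r' y' h1 h2
      exact hpmin (r', y') ⟨h1, h2⟩
    obtain ⟨r₀, y₀, h1, h2, h3, h4⟩ := stmt10_shrink hk x
      (∑ i : I, (Finset.univ.filter fun j => p.1 j = p.1 i).card)
      p.1 p.2 hpidem hpsize hopt le_rfl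
    exact ⟨r₀, y₀, h1, h2, h3, h4⟩
end

section
/- Any feasible solution to the $k$-group clustering problem (a partition of an indexed family of points in $\{0,1\}^m$ into clusters of size at least $k$ with centers in $\{0,1\}^m$) yields a $k$-anonymous dataset obtained by replacing every point with its cluster's center, and the number of coordinate changes made (sum of Hamming distances of points to their centers) equals the clustering cost. Conversely, any $k$-anonymous transformation of the dataset yields a $k$-group clustering of equal cost. -/
open Finset

/-- `k`-anonymity: every record is identical to at least `k - 1` other records
(i.e. every value of the family is attained by at least `k` indices). -/
def kAnon {I : Type*} [Fintype I] {m : ℕ} (k : ℕ) (x' : I → Fin m → Bool) : Prop :=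
  ∀ i : I, k ≤ (Finset.univ.filter fun j => x' j = x' i).card

theorem stmt13 {I : Type*} [Fintype I] [DecidableEq I] {m k : ℕ}
    (x : I → Fin m → Bool) :
    (∀ (r : I → I) (y : I → Fin m → Bool), (∀ i, r (r i) = r i) →
      (∀ i : I, k ≤ (Finset.univ.filter fun j => r j = r i).card) →
      kAnon k (fun i => y (r i)) ∧
        ∑ i : I, hammingDist (x i) ((fun i => y (r i)) i) =
          ∑ i : I, hammingDist (x i) (y (r i))) ∧
    (∀ x' : I → Fin m → Bool, kAnon k x' →
      ∃ (r : I → I) (y : I → Fin m → Bool), (∀ i, r (r i) = r i) ∧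
        (∀ i : I, k ≤ (Finset.univ.filter fun j => r j = r i).card) ∧
        (∀ i, y (r i) = x' i) ∧
        ∑ i : I, hammingDist (x i) (y (r i)) =
          ∑ i : I, hammingDist (x i) (x' i)) := by
  constructor
  · intro r y hr hcard
    refine ⟨fun i => ?_, rfl⟩
    calc k ≤ (univ.filter fun j => r j = r i).card := hcard i
      _ ≤ (univ.filter fun j => y (r j) = y (r i)).card := by
          apply Finset.card_le_card
          intro j hj
          simp only [mem_filter] at *
          exact ⟨hj.1, by rw [hj.2]⟩
  · intro x' hx'
    letI : LinearOrder I := LinearOrder.lift' (Fintype.equivFin I) (Equiv.injective _)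
    have hne : ∀ i : I, (univ.filter fun j => x' j = x' i).Nonempty :=
      fun i => ⟨i, by simp⟩
    set r := fun i => (univ.filter fun j => x' j = x' i).min' (hne i) with hrdef
    have hmem : ∀ i, r i ∈ univ.filter fun j => x' j = x' i :=
      fun i => Finset.min'_mem _ _
    have hx'r : ∀ i, x' (r i) = x' i := fun i => (mem_filter.mp (hmem i)).2
    have key : ∀ i j, x' i = x' j → r i = r j := by
      intro i j h
      simp only [hrdef]
      congr 1
      simp [h]
    have hsets : ∀ i, (univ.filter fun j => r j = r i) = (univ.filter fun j => x' j = x' i) := by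
      intro i
      ext j
      simp only [mem_filter, mem_univ, true_and]
      constructor
      · intro h
        calc x' j = x' (r j) := (hx'r j).symm
          _ = x' (r i) := by rw [h]
          _ = x' i := hx'r i
      · intro h; exact key j i h
    refine ⟨r, x', fun i => key (r i) i (hx'r i), fun i => by rw [hsets i]; exact hx' i,
      hx'r, ?_⟩
    exact Finset.sum_congr rfl fun i _ => by rw [hx'r i]
end

section
/- The optimal flip-based $k$-anonymization cost of a binary dataset equals the optimal $k$-group clustering cost with arbitrary centers in $\{0,1\}^m$; moreover, restricting centers to data points increases the optimal cost by a factor of at most $2$. Hence an $\alpha$-approximation to the data-point-centered $k$-group clustering problem (load-balanced facility location) yields a $2\alpha$-approximation to the flip-based $k$-anonymization problem. -/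
open Finset

/-- Costs of feasible flip-based `k`-anonymous solutions. -/
def flipCosts {I : Type*} [Fintype I] {m : ℕ} (k : ℕ) (x : I → Fin m → Bool) :
    Set ℕ :=
  {c | ∃ x' : I → Fin m → Bool, kAnon k x' ∧ c = ∑ i : I, hammingDist (x i) (x' i)}

/-- Costs of feasible `k`-group clusterings with arbitrary centers in `{0,1}^m`. -/
def clusterCosts {I : Type*} [Fintype I] [DecidableEq I] {m : ℕ} (k : ℕ)
    (x : I → Fin m → Bool) : Set ℕ :=
  {c | ∃ (r : I → I) (y : I → Fin m → Bool), (∀ i, r (r i) = r i) ∧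
    (∀ i : I, k ≤ (Finset.univ.filter fun j => r j = r i).card) ∧
    c = ∑ i : I, hammingDist (x i) (y (r i))}

/-- Costs of feasible `k`-group clusterings with centers restricted to data points. -/
def restrCosts {I : Type*} [Fintype I] [DecidableEq I] {m : ℕ} (k : ℕ)
    (x : I → Fin m → Bool) : Set ℕ :=
  {c | ∃ (r : I → I) (y : I → Fin m → Bool), (∀ i, r (r i) = r i) ∧
    (∀ i : I, k ≤ (Finset.univ.filter fun j => r j = r i).card) ∧
    (∀ i : I, ∃ j : I, y i = x j) ∧
    c = ∑ i : I, hammingDist (x i) (y (r i))}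

lemma cluster_subset_flip {I : Type*} [Fintype I] [DecidableEq I] {m k : ℕ}
    (x : I → Fin m → Bool) : clusterCosts k x ⊆ flipCosts k x := by
  rintro c ⟨r, y, _, hcard, hc⟩
  refine ⟨fun i => y (r i), fun i => le_trans (hcard i) (Finset.card_le_card ?_), hc⟩
  intro j hj
  simp only [Finset.mem_filter, Finset.mem_univ, true_and] at hj ⊢
  rw [hj]

lemma flip_subset_cluster {I : Type*} [Fintype I] [DecidableEq I] {m k : ℕ}
    (hk : 1 ≤ k) (hI : k ≤ Fintype.card I)
    (x : I → Fin m → Bool) : flipCosts k x ⊆ clusterCosts k x := by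
  have hne : Nonempty I := Fintype.card_pos_iff.mp (lt_of_lt_of_le hk hI)
  rintro c ⟨x', hanon, hc⟩
  classical
  set g : (Fin m → Bool) → I := fun v =>
    if h : ∃ j, x' j = v then Classical.choose h else Classical.arbitrary I with hg
  set r : I → I := fun i => g (x' i) with hr
  have hxr : ∀ i, x' (r i) = x' i := by
    intro i
    have h : ∃ j, x' j = x' i := ⟨i, rfl⟩
    simp only [hr, hg, dif_pos h]
    exact Classical.choose_spec h
  refine ⟨r, x', ?_, ?_, ?_⟩
  · intro i
    show g (x' (r i)) = r i
    rw [hxr i]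
  · intro i
    refine le_trans (hanon i) (Finset.card_le_card ?_)
    intro j hj
    simp only [Finset.mem_filter, Finset.mem_univ, true_and] at hj ⊢
    show g (x' j) = g (x' i)
    rw [hj]
  · rw [hc]
    exact Finset.sum_congr rfl fun i _ => by rw [hxr i]

lemma exists_restr_le {I : Type*} [Fintype I] [DecidableEq I] {m k : ℕ}
    (x : I → Fin m → Bool) {c : ℕ} (hc : c ∈ clusterCosts k x) :
    ∃ c' ∈ restrCosts k x, c' ≤ 2 * c := by
  obtain ⟨r, y, hidem, hcard, hc⟩ := hc
  classical
  set am : I → I := fun a =>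
    if h : (Finset.univ.filter fun j => r j = a).Nonempty then
      (Finset.exists_min_image _ (fun j => hammingDist (x j) (y a)) h).choose
    else a with ham
  have hmem : ∀ i, i ∈ Finset.univ.filter fun j => r j = r i := by
    intro i; simp
  have hspec : ∀ i, r (am (r i)) = r i ∧
      ∀ j ∈ (Finset.univ.filter fun j => r j = r i),
        hammingDist (x (am (r i))) (y (r i)) ≤ hammingDist (x j) (y (r i)) := by
    intro i
    have h : (Finset.univ.filter fun j => r j = r i).Nonempty := ⟨i, hmem i⟩
    have := (Finset.exists_min_image _ (fun j => hammingDist (x j) (y (r i))) h).choose_spec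
    obtain ⟨h1, h2⟩ := this
    have hame : am (r i) =
        (Finset.exists_min_image _ (fun j => hammingDist (x j) (y (r i))) h).choose := by
      rw [ham]; exact dif_pos h
    constructor
    · rw [hame]; exact (Finset.mem_filter.mp h1).2
    · intro j hj
      rw [hame]; exact h2 j hj
  set r' : I → I := fun i => am (r i) with hr'
  refine ⟨∑ i : I, hammingDist (x i) (x (r' i)), ⟨r', x, ?_, ?_, fun i => ⟨i, rfl⟩, rfl⟩, ?_⟩
  · intro i
    show am (r (am (r i))) = am (r i)
    rw [(hspec i).1]
  · intro i
    refine le_trans (hcard i) (Finset.card_le_card ?_)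
    intro j hj
    simp only [Finset.mem_filter, Finset.mem_univ, true_and] at hj ⊢
    show am (r j) = am (r i)
    rw [hj]
  · rw [hc, Finset.mul_sum]
    refine Finset.sum_le_sum fun i _ => ?_
    have htri := hammingDist_triangle (x i) (y (r i)) (x (r' i))
    have hmin : hammingDist (x (r' i)) (y (r i)) ≤ hammingDist (x i) (y (r i)) :=
      (hspec i).2 i (hmem i)
    have hsymm : hammingDist (y (r i)) (x (r' i)) = hammingDist (x (r' i)) (y (r i)) :=
      hammingDist_comm _ _
    omega

theorem stmt19 {I : Type*} [Fintype I] [DecidableEq I] {m k : ℕ} (hk : 1 ≤ k)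
    (hI : k ≤ Fintype.card I) (x : I → Fin m → Bool) (α : ℝ) (hα : 1 ≤ α) :
    sInf (flipCosts k x) = sInf (clusterCosts k x) ∧
    sInf (restrCosts k x) ≤ 2 * sInf (clusterCosts k x) ∧
    ∀ c ∈ restrCosts k x, (c : ℝ) ≤ α * ((sInf (restrCosts k x) : ℕ) : ℝ) →
      c ∈ flipCosts k x ∧ (c : ℝ) ≤ 2 * α * ((sInf (flipCosts k x) : ℕ) : ℝ) := by
  classical
  have hne : Nonempty I := Fintype.card_pos_iff.mp (lt_of_lt_of_le hk hI)
  have hsets : flipCosts k x = clusterCosts k x :=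
    Set.Subset.antisymm (flip_subset_cluster hk hI x) (cluster_subset_flip x)
  have hcne : (clusterCosts k x).Nonempty := by
    obtain ⟨i₀⟩ := hne
    refine ⟨_, fun _ => i₀, x, fun _ => rfl, fun i => ?_, rfl⟩
    simpa using hI
  have h2 : sInf (restrCosts k x) ≤ 2 * sInf (clusterCosts k x) := by
    obtain ⟨c', hc', hle⟩ := exists_restr_le x (Nat.sInf_mem hcne)
    exact le_trans (Nat.sInf_le hc') hle
  have hrc : restrCosts k x ⊆ clusterCosts k x := by
    rintro c ⟨r, y, h1, h2, _, h4⟩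
    exact ⟨r, y, h1, h2, h4⟩
  refine ⟨by rw [hsets], h2, ?_⟩
  intro c hc hcle
  refine ⟨hsets ▸ hrc hc, ?_⟩
  have hsc : sInf (clusterCosts k x) ≤ sInf (flipCosts k x) := by rw [hsets]
  have h2' : ((sInf (restrCosts k x) : ℕ) : ℝ) ≤ 2 * ((sInf (flipCosts k x) : ℕ) : ℝ) := by
    rw [hsets]
    exact_mod_cast h2
  have hα0 : (0:ℝ) ≤ α := le_trans zero_le_one hα
  calc (c : ℝ) ≤ α * ((sInf (restrCosts k x) : ℕ) : ℝ) := hcle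
    _ ≤ α * (2 * ((sInf (flipCosts k x) : ℕ) : ℝ)) := by
        exact mul_le_mul_of_nonneg_left h2' hα0
    _ = 2 * α * ((sInf (flipCosts k x) : ℕ) : ℝ) := by ring
end
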